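/- For a 2×2×2 cube c = (c_{i,j,k}) with entries in a commutative ring, the three binary quadratic forms Q_i(x,y) = −det(F_i x − F_i' y), where F_i and F_i' are the two opposite faces of c in the i-th direction viewed as 2×2 matrices, all have the same discriminant. -/
import Mathlib


noncomputable section

variable {R : Type*} [CommRing R]

/-- The face of a 2×2×2 cube containing `c 0 0 0` in the first direction. -/
def face1 (c : Fin 2 → Fin 2 → Fin 2 → R) : Matrix (Fin 2) (Fin 2) R :=
  Matrix.of fun j k => c 0 j k

/-- The opposite face in the first direction. -/
def face1' (c : Fin 2 → Fin 2 → Fin 2 → R) : Matrix (Fin 2) (Fin 2) R :=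
  Matrix.of fun j k => c 1 j k

/-- The face containing `c 0 0 0` in the second direction. -/
def face2 (c : Fin 2 → Fin 2 → Fin 2 → R) : Matrix (Fin 2) (Fin 2) R :=
  Matrix.of fun i k => c i 0 k

/-- The opposite face in the second direction. -/
def face2' (c : Fin 2 → Fin 2 → Fin 2 → R) : Matrix (Fin 2) (Fin 2) R :=
  Matrix.of fun i k => c i 1 k

/-- The face containing `c 0 0 0` in the third direction. -/
def face3 (c : Fin 2 → Fin 2 → Fin 2 → R) : Matrix (Fin 2) (Fin 2) R :=
  Matrix.of fun i j => c i j 0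

/-- The opposite face in the third direction. -/
def face3' (c : Fin 2 → Fin 2 → Fin 2 → R) : Matrix (Fin 2) (Fin 2) R :=
  Matrix.of fun i j => c i j 1

/-- The binary quadratic form `Q(x,y) = −det(F x − F' y)` of a pair of opposite faces. -/
def cubeQ (F F' : Matrix (Fin 2) (Fin 2) R) (x y : R) : R :=
  -(x • F - y • F').det

/-- The discriminant `b² − 4ac` of the binary quadratic form `Q(x,y) = ax² + bxy + cy²`
attached to a pair of opposite faces. -/
def cubeDisc (F F' : Matrix (Fin 2) (Fin 2) R) : R :=
  (cubeQ F F' 1 1 - cubeQ F F' 1 0 - cubeQ F F' 0 1) ^ 2 -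
    4 * cubeQ F F' 1 0 * cubeQ F F' 0 1

/-- The three binary quadratic forms `Q_i(x,y) = −det(F_i x − F_i' y)` obtained from the
three pairs of opposite faces of a 2×2×2 cube all have the same discriminant. -/
theorem cube_disc_eq (c : Fin 2 → Fin 2 → Fin 2 → R) :
    cubeDisc (face1 c) (face1' c) = cubeDisc (face2 c) (face2' c) ∧
    cubeDisc (face2 c) (face2' c) = cubeDisc (face3 c) (face3' c) := by
  constructor <;>
  · simp only [cubeDisc, cubeQ, face1, face1', face2, face2', face3, face3',
      Matrix.det_fin_two, Matrix.sub_apply, Matrix.smul_apply, Matrix.of_apply,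
      smul_eq_mul]
    ring
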